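/- Let G = (V,E) be a finite bi-directed graph and let S be a group of permutations of V that leaves G invariant (every σ ∈ S is a graph automorphism of G). Let p be a binary distribution on V satisfying the connected set Markov property for G. Then p lies in the symmetry model B(S) — i.e., p_i = p_{σ(i)} for all σ ∈ S and all cells i ∈ {0,1}^V, where σ(i) = (i_{σ(v)})_{v∈V} — if and only if the Möbius parameters of p satisfy q_C(p) = q_{σ(C)}(p) for every connected set C ⊆ V and every σ ∈ S. -/

import Mathlib

open Finset

namespace BMMI

variable {V : Type*} [Fintype V] [DecidableEq V]

/-- `Pr p A a` is the probability of the event `X_A = a|_A` under `p`. -/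
def Pr (p : (V → Bool) → ℝ) (A : Finset V) (a : V → Bool) : ℝ :=
  ∑ i ∈ Finset.univ.filter (fun i : V → Bool => ∀ v ∈ A, i v = a v), p i

/-- `p` is a binary distribution on `V`. -/
def IsDist (p : (V → Bool) → ℝ) : Prop :=
  (∀ i, 0 ≤ p i) ∧ ∑ i : V → Bool, p i = 1

/-- `Pr2 p S T a b` is the probability of the joint event `X_S = a|_S, X_T = b|_T`. -/
def Pr2 (p : (V → Bool) → ℝ) (S T : Finset V) (a b : V → Bool) : ℝ :=
  ∑ i ∈ Finset.univ.filter
      (fun i : V → Bool => (∀ v ∈ S, i v = a v) ∧ (∀ v ∈ T, i v = b v)), p i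

/-- `X_S` and `X_T` are independent under `p`. -/
def Indep (p : (V → Bool) → ℝ) (S T : Finset V) : Prop :=
  ∀ a b : V → Bool, Pr2 p S T a b = Pr p S a * Pr p T b

/-- `spo G A` consists of `A` together with all vertices adjacent to a vertex of `A`. -/
def spo (G : SimpleGraph V) [DecidableRel G.Adj] (A : Finset V) : Finset V :=
  Finset.univ.filter (fun w => w ∈ A ∨ ∃ v ∈ A, G.Adj v w)

/-- `C` is connected in `G`: every pair of vertices of `C` is joined by a walk
all of whose vertices lie in `C`. -/
def Conn (G : SimpleGraph V) (C : Finset V) : Prop :=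
  ∀ v ∈ C, ∀ w ∈ C, ∃ W : G.Walk v w, ∀ x ∈ W.support, x ∈ C

/-- The connected set Markov property for the bi-directed graph `G`. -/
def CSMP (G : SimpleGraph V) [DecidableRel G.Adj] (p : (V → Bool) → ℝ) : Prop :=
  ∀ C : Finset V, C.Nonempty → Conn G C → Indep p C (Finset.univ \ spo G C)

/-- `C` is an inclusion-maximal connected subset of `D` (a connected component of the
induced subgraph on `D`). -/
def IsMaxConnComp (G : SimpleGraph V) (D C : Finset V) : Prop :=
  C ⊆ D ∧ C.Nonempty ∧ Conn G C ∧
    ∀ C' : Finset V, C ⊆ C' → C' ⊆ D → Conn G C' → C' = C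

/-- The Möbius parameter `q_A(p) = P(X_A = 0)`. -/
def qM (p : (V → Bool) → ℝ) (A : Finset V) : ℝ := Pr p A (fun _ => false)

set_option linter.unusedSectionVars false
set_option linter.unusedVariables false

lemma Pr_insert (p : (V → Bool) → ℝ) {B : Finset V} {w : V} (hw : w ∉ B) (b : V → Bool) :
    Pr p B b = Pr p (insert w B) (Function.update b w true)
      + Pr p (insert w B) (Function.update b w false) := by
  classical
  have key : ∀ c : Bool, Pr p (insert w B) (Function.update b w c)
      = ∑ i ∈ univ.filter (fun i : V → Bool => (∀ v ∈ B, i v = b v) ∧ i w = c), p i := by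
    intro c
    unfold Pr
    congr 1
    apply Finset.filter_congr
    intro i _
    simp only [Finset.mem_insert]
    constructor
    · intro h
      refine ⟨fun v hv => ?_, ?_⟩
      · have hvw : v ≠ w := fun e => hw (e ▸ hv)
        have := h v (Or.inr hv)
        rwa [Function.update_apply, if_neg hvw] at this
      · have := h w (Or.inl rfl)
        rwa [Function.update_self] at this
    · rintro ⟨h1, h2⟩ v hv
      rcases hv with rfl | hv
      · rw [Function.update_self]; exact h2
      · have hvw : v ≠ w := fun e => hw (e ▸ hv)
        rw [Function.update_apply, if_neg hvw]; exact h1 v hv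
  rw [key true, key false]
  unfold Pr
  rw [← Finset.sum_filter_add_sum_filter_not
    (univ.filter fun i : V → Bool => ∀ v ∈ B, i v = b v) (fun i => i w = true)]
  simp only [Finset.filter_filter, Bool.not_eq_true]

lemma Pr2_insert (p : (V → Bool) → ℝ) (S : Finset V) (a : V → Bool)
    {B : Finset V} {w : V} (hw : w ∉ B) (b : V → Bool) :
    Pr2 p S B a b = Pr2 p S (insert w B) a (Function.update b w true)
      + Pr2 p S (insert w B) a (Function.update b w false) := by
  classical
  have key : ∀ c : Bool, Pr2 p S (insert w B) a (Function.update b w c)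
      = ∑ i ∈ univ.filter
          (fun i : V → Bool => ((∀ v ∈ S, i v = a v) ∧ ∀ v ∈ B, i v = b v) ∧ i w = c), p i := by
    intro c
    unfold Pr2
    congr 1
    apply Finset.filter_congr
    intro i _
    simp only [Finset.mem_insert]
    constructor
    · rintro ⟨hS, h⟩
      refine ⟨⟨hS, fun v hv => ?_⟩, ?_⟩
      · have hvw : v ≠ w := fun e => hw (e ▸ hv)
        have := h v (Or.inr hv)
        rwa [Function.update_apply, if_neg hvw] at this
      · have := h w (Or.inl rfl)
        rwa [Function.update_self] at this
    · rintro ⟨⟨hS, h1⟩, h2⟩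
      refine ⟨hS, fun v hv => ?_⟩
      rcases hv with rfl | hv
      · rw [Function.update_self]; exact h2
      · have hvw : v ≠ w := fun e => hw (e ▸ hv)
        rw [Function.update_apply, if_neg hvw]; exact h1 v hv
  rw [key true, key false]
  unfold Pr2
  rw [← Finset.sum_filter_add_sum_filter_not
    (univ.filter fun i : V → Bool => (∀ v ∈ S, i v = a v) ∧ ∀ v ∈ B, i v = b v)
    (fun i => i w = true)]
  simp only [Finset.filter_filter, Bool.not_eq_true]

lemma Indep.erase {p : (V → Bool) → ℝ} {S T : Finset V} (h : Indep p S T) (w : V) :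
    Indep p S (T.erase w) := by
  classical
  by_cases hw : w ∈ T
  · intro a b
    have hrw : insert w (T.erase w) = T := Finset.insert_erase hw
    have hwe : w ∉ T.erase w := Finset.notMem_erase w T
    rw [Pr2_insert p S a hwe b, Pr_insert p hwe b, hrw]
    rw [h a _, h a _]
    ring
  · rwa [Finset.erase_eq_of_notMem hw]

lemma Indep.mono {p : (V → Bool) → ℝ} {S : Finset V} :
    ∀ T : Finset V, Indep p S T → ∀ T' ⊆ T, Indep p S T' := by
  classical
  intro T
  induction T using Finset.strongInduction with
  | _ T ih =>
    intro h T' hT'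
    by_cases heq : T' = T
    · exact heq ▸ h
    · obtain ⟨w, hwT, hwT'⟩ : ∃ w ∈ T, w ∉ T' := by
        by_contra hc
        push_neg at hc
        exact heq (Finset.Subset.antisymm hT' hc)
      exact ih (T.erase w) (Finset.erase_ssubset hwT) (h.erase w) T'
        (fun x hx => Finset.mem_erase.mpr ⟨fun e => hwT' (e ▸ hx), hT' hx⟩)

lemma qM_split {p : (V → Bool) → ℝ} {C A : Finset V} (hC : C ⊆ A)
    (h : Indep p C (A \ C)) : qM p A = qM p C * qM p (A \ C) := by
  classical
  unfold qM
  rw [← h (fun _ => false) (fun _ => false)]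
  unfold Pr2 Pr
  congr 1
  apply Finset.filter_congr
  intro i _
  constructor
  · intro hA
    exact ⟨fun v hv => hA v (hC hv), fun v hv => hA v (Finset.mem_sdiff.mp hv).1⟩
  · rintro ⟨h1, h2⟩ v hv
    by_cases hvC : v ∈ C
    · exact h1 v hvC
    · exact h2 v (Finset.mem_sdiff.mpr ⟨hv, hvC⟩)

/-- Existence of a connected component within `A` whose complement in `A` avoids its spo. -/
lemma exists_comp (G : SimpleGraph V) [DecidableRel G.Adj] {A : Finset V}
    (hA : A.Nonempty) :
    ∃ C : Finset V, C.Nonempty ∧ C ⊆ A ∧ Conn G C ∧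
      A \ C ⊆ Finset.univ \ spo G C := by
  classical
  obtain ⟨v, hv⟩ := hA
  set C : Finset V := A.filter (fun w => ∃ W : G.Walk v w, ∀ x ∈ W.support, x ∈ A) with hCdef
  have hvC : v ∈ C := by
    refine Finset.mem_filter.mpr ⟨hv, ⟨SimpleGraph.Walk.nil, ?_⟩⟩
    intro x hx
    simp only [SimpleGraph.Walk.support_nil, List.mem_singleton] at hx
    exact hx ▸ hv
  have hCA : C ⊆ A := Finset.filter_subset _ _
  have memC : ∀ w, w ∈ C ↔ w ∈ A ∧ ∃ W : G.Walk v w, ∀ x ∈ W.support, x ∈ A := by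
    intro w; simp [hCdef]
  -- any vertex on a good walk is in C
  have hsub : ∀ w, ∀ W : G.Walk v w, (∀ x ∈ W.support, x ∈ A) → ∀ x ∈ W.support, x ∈ C := by
    intro w W hW x hx
    refine (memC x).mpr ⟨hW x hx, ⟨W.takeUntil x hx, fun y hy => hW y ?_⟩⟩
    exact SimpleGraph.Walk.support_takeUntil_subset W hx hy
  have hConn : Conn G C := by
    intro w hw w' hw'
    obtain ⟨-, W1, hW1⟩ := (memC w).mp hw
    obtain ⟨-, W2, hW2⟩ := (memC w').mp hw'
    refine ⟨W1.reverse.append W2, ?_⟩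
    intro x hx
    rw [SimpleGraph.Walk.mem_support_append_iff] at hx
    rcases hx with hx | hx
    · rw [SimpleGraph.Walk.support_reverse, List.mem_reverse] at hx
      exact hsub w W1 hW1 x hx
    · exact hsub w' W2 hW2 x hx
  refine ⟨C, ⟨v, hvC⟩, hCA, hConn, ?_⟩
  intro u hu
  obtain ⟨huA, huC⟩ := Finset.mem_sdiff.mp hu
  refine Finset.mem_sdiff.mpr ⟨Finset.mem_univ u, ?_⟩
  intro hspo
  rcases Finset.mem_filter.mp hspo with ⟨-, hc | ⟨c, hcC, hadj⟩⟩
  · exact huC hc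
  · obtain ⟨-, W, hW⟩ := (memC c).mp hcC
    apply huC
    refine (memC u).mpr ⟨huA, ⟨W.concat hadj, ?_⟩⟩
    intro x hx
    rw [SimpleGraph.Walk.support_concat, List.mem_append] at hx
    rcases hx with hx | hx
    · exact hW x hx
    · simp only [List.mem_singleton] at hx
      exact hx ▸ huA

lemma conn_image {G : SimpleGraph V} (σ : Equiv.Perm V)
    (hauto : ∀ v w : V, G.Adj v w ↔ G.Adj (σ v) (σ w))
    {C : Finset V} (hC : Conn G C) : Conn G (C.image σ) := by
  classical
  set f : G →g G := ⟨σ, fun h => (hauto _ _).mp h⟩ with hf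
  intro v' hv' w' hw'
  obtain ⟨v, hv, rfl⟩ := Finset.mem_image.mp hv'
  obtain ⟨w, hw, rfl⟩ := Finset.mem_image.mp hw'
  obtain ⟨W, hW⟩ := hC v hv w hw
  refine ⟨W.map f, ?_⟩
  intro x hx
  rw [SimpleGraph.Walk.support_map, List.mem_map] at hx
  obtain ⟨y, hy, rfl⟩ := hx
  exact Finset.mem_image.mpr ⟨y, hW y hy, rfl⟩

lemma image_sdiff_spo {G : SimpleGraph V} [DecidableRel G.Adj] (σ : Equiv.Perm V)
    (hauto : ∀ v w : V, G.Adj v w ↔ G.Adj (σ v) (σ w))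
    {A C : Finset V} (hAC : A \ C ⊆ Finset.univ \ spo G C) :
    (A.image σ) \ (C.image σ) ⊆ Finset.univ \ spo G (C.image σ) := by
  classical
  intro x hx
  obtain ⟨hxA, hxC⟩ := Finset.mem_sdiff.mp hx
  obtain ⟨u, huA, rfl⟩ := Finset.mem_image.mp hxA
  have huC : u ∉ C := fun h => hxC (Finset.mem_image.mpr ⟨u, h, rfl⟩)
  have hu : u ∈ Finset.univ \ spo G C := hAC (Finset.mem_sdiff.mpr ⟨huA, huC⟩)
  have huspo : u ∉ spo G C := (Finset.mem_sdiff.mp hu).2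
  refine Finset.mem_sdiff.mpr ⟨Finset.mem_univ _, ?_⟩
  intro hspo
  rcases Finset.mem_filter.mp hspo with ⟨-, hc | ⟨c', hc'C, hadj⟩⟩
  · exact hxC hc
  · obtain ⟨c, hcC, rfl⟩ := Finset.mem_image.mp hc'C
    exact huspo (Finset.mem_filter.mpr ⟨Finset.mem_univ _,
      Or.inr ⟨c, hcC, (hauto c u).mpr hadj⟩⟩)

lemma qM_image {G : SimpleGraph V} [DecidableRel G.Adj] {p : (V → Bool) → ℝ}
    (hM : CSMP G p) (σ : Equiv.Perm V)
    (hauto : ∀ v w : V, G.Adj v w ↔ G.Adj (σ v) (σ w))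
    (hq : ∀ C : Finset V, Conn G C → qM p C = qM p (C.image σ)) :
    ∀ A : Finset V, qM p A = qM p (A.image σ) := by
  classical
  intro A
  induction A using Finset.strongInduction with
  | _ A ih =>
    rcases A.eq_empty_or_nonempty with rfl | hA
    · simp
    obtain ⟨C, hCne, hCA, hConn, hspo⟩ := exists_comp G hA
    have h1 : Indep p C (A \ C) :=
      Indep.mono _ (hM C hCne hConn) _ (fun x hx => hspo hx)
    have hCne' : (C.image σ).Nonempty := hCne.image σ
    have hConn' : Conn G (C.image σ) := conn_image σ hauto hConn
    have hspo' := image_sdiff_spo σ hauto hspo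
    have h2 : Indep p (C.image σ) ((A.image σ) \ (C.image σ)) :=
      Indep.mono _ (hM _ hCne' hConn') _ (fun x hx => hspo' hx)
    have e1 : qM p A = qM p C * qM p (A \ C) := qM_split hCA h1
    have e2 : qM p (A.image σ) =
        qM p (C.image σ) * qM p ((A.image σ) \ (C.image σ)) :=
      qM_split (Finset.image_subset_image hCA) h2
    have himg : (A.image σ) \ (C.image σ) = (A \ C).image σ :=
      (Finset.image_sdiff _ _ σ.injective).symm
    have hlt : A \ C ⊂ A := Finset.sdiff_ssubset hCA hCne
    rw [e1, e2, himg, ← hq C hConn, ← ih (A \ C) hlt]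

/-- compl commutes with image under a permutation -/
lemma image_compl (σ : Equiv.Perm V) (B : Finset V) :
    (Bᶜ).image σ = (B.image σ)ᶜ := by
  classical
  ext x
  simp only [Finset.mem_compl, Finset.mem_image]
  constructor
  · rintro ⟨u, hu, rfl⟩ ⟨w, hw, hww⟩
    exact hu (σ.injective hww ▸ hw)
  · intro h
    exact ⟨σ.symm x, fun hx => h ⟨σ.symm x, hx, σ.apply_symm_apply x⟩,
      σ.apply_symm_apply x⟩

lemma qM_compl (p : (V → Bool) → ℝ) (B : Finset V) :
    qM p Bᶜ = ∑ E ∈ B.powerset, p (fun v => decide (v ∈ E)) := by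
  classical
  unfold qM Pr
  refine Finset.sum_nbij' (fun i => Finset.univ.filter (fun v => i v = true))
    (fun E => fun v => decide (v ∈ E)) ?_ ?_ ?_ ?_ ?_
  · intro i hi
    rw [Finset.mem_filter] at hi
    refine Finset.mem_powerset.mpr (fun v hv => ?_)
    rw [Finset.mem_filter] at hv
    by_contra hvB
    have := hi.2 v (Finset.mem_compl.mpr hvB)
    rw [this] at hv
    exact Bool.false_ne_true hv.2
  · intro E hE
    refine Finset.mem_filter.mpr ⟨Finset.mem_univ _, fun v hv => ?_⟩
    have hvB : v ∉ B := Finset.mem_compl.mp hv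
    have : v ∉ E := fun h => hvB (Finset.mem_powerset.mp hE h)
    simp [this]
  · intro i _
    funext v
    by_cases h : i v = true
    · simp [h]
    · simp only [Bool.not_eq_true] at h
      simp [h]
  · intro E _
    ext v
    simp
  · intro i _
    congr 1
    funext v
    by_cases h : i v = true
    · simp [h]
    · simp only [Bool.not_eq_true] at h
      simp [h]

/-- inversion key: the cell probabilities, as functions of subsets, are invariant. -/
lemma phat_image {p : (V → Bool) → ℝ}
    (σ : Equiv.Perm V)
    (hQ : ∀ A : Finset V, qM p A = qM p (A.image σ)) :
    ∀ B : Finset V, p (fun v => decide (v ∈ B.image σ)) = p (fun v => decide (v ∈ B)) := by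
  classical
  intro B
  induction B using Finset.strongInduction with
  | _ B ih =>
    have hq : qM p Bᶜ = qM p (B.image σ)ᶜ := by
      rw [hQ Bᶜ, image_compl]
    rw [qM_compl, qM_compl] at hq
    have hBmem : B ∈ B.powerset := Finset.mem_powerset.mpr (Finset.Subset.refl B)
    have hBmem' : B.image σ ∈ (B.image σ).powerset :=
      Finset.mem_powerset.mpr (Finset.Subset.refl _)
    rw [← Finset.add_sum_erase _ _ hBmem, ← Finset.add_sum_erase _ _ hBmem'] at hq
    have hrest : ∑ E ∈ B.powerset.erase B, p (fun v => decide (v ∈ E)) =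
        ∑ E ∈ (B.image σ).powerset.erase (B.image σ), p (fun v => decide (v ∈ E)) := by
      refine Finset.sum_nbij' (fun E => E.image σ) (fun E => E.image σ.symm) ?_ ?_ ?_ ?_ ?_
      · intro E hE
        rw [Finset.mem_erase, Finset.mem_powerset] at hE ⊢
        exact ⟨fun h => hE.1 ((Finset.image_injective σ.injective) h),
          Finset.image_subset_image hE.2⟩
      · intro E hE
        rw [Finset.mem_erase, Finset.mem_powerset] at hE ⊢
        constructor
        · intro h
          apply hE.1
          rw [← h, Finset.image_image]
          simp
        · intro v hv
          obtain ⟨u, hu, rfl⟩ := Finset.mem_image.mp hv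
          have := hE.2 hu
          obtain ⟨w, hw, rfl⟩ := Finset.mem_image.mp this
          simpa using hw
      · intro E _
        simp [Finset.image_image]
      · intro E _
        simp [Finset.image_image]
      · intro E hE
        rw [Finset.mem_erase, Finset.mem_powerset] at hE
        have hss : E ⊂ B := lt_of_le_of_ne hE.2 hE.1
        exact (ih E hss).symm
    rw [hrest] at hq
    linarith

/-- Theorem (symmetry and independence): for a distribution in `B(G)` and a group
`S` of automorphisms of `G`, invariance of the cell probabilities under `S` is
equivalent to invariance of the connected-set Möbius parameters under `S`. -/
theorem stmt10 (G : SimpleGraph V) [DecidableRel G.Adj]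
    (S : Subgroup (Equiv.Perm V))
    (hS : ∀ σ ∈ S, ∀ v w : V, G.Adj v w ↔ G.Adj (σ v) (σ w))
    (p : (V → Bool) → ℝ) (hp : IsDist p) (hM : CSMP G p) :
    (∀ σ ∈ S, ∀ i : V → Bool, p i = p (fun v => i (σ v))) ↔
      (∀ σ ∈ S, ∀ C : Finset V, Conn G C → qM p C = qM p (C.image σ)) := by
  classical
  constructor
  · intro h σ hσ C _
    have : qM p (C.image σ) = qM p C := by
      unfold qM Pr
      refine Finset.sum_nbij' (fun i => fun v => i (σ v)) (fun j => fun v => j (σ.symm v))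
        ?_ ?_ ?_ ?_ ?_
      · intro i hi
        rw [Finset.mem_filter] at hi ⊢
        exact ⟨Finset.mem_univ _, fun v hv =>
          hi.2 (σ v) (Finset.mem_image.mpr ⟨v, hv, rfl⟩)⟩
      · intro j hj
        rw [Finset.mem_filter] at hj ⊢
        refine ⟨Finset.mem_univ _, fun w hw => ?_⟩
        obtain ⟨v, hv, rfl⟩ := Finset.mem_image.mp hw
        show j (σ.symm (σ v)) = false
        rw [Equiv.symm_apply_apply]
        exact hj.2 v hv
      · intro i _
        funext v
        simp
      · intro j _
        funext v
        simp
      · intro i _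
        exact h σ hσ i
    exact this.symm
  · intro hq σ hσ i
    have hσ' : σ⁻¹ ∈ S := S.inv_mem hσ
    have hQ : ∀ A : Finset V, qM p A = qM p (A.image (σ⁻¹ : Equiv.Perm V)) :=
      qM_image hM (σ⁻¹ : Equiv.Perm V) (hS σ⁻¹ hσ') (fun C hC => hq σ⁻¹ hσ' C hC)
    set B : Finset V := Finset.univ.filter (fun v => i v = true) with hB
    have key := phat_image (σ⁻¹ : Equiv.Perm V) hQ B
    have e1 : (fun v => decide (v ∈ B)) = i := by
      funext v
      by_cases h : i v = true
      · simp [hB, h]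
      · simp only [Bool.not_eq_true] at h
        simp [hB, h]
    have e2 : (fun v => decide (v ∈ B.image (σ⁻¹ : Equiv.Perm V))) =
        (fun v => i (σ v)) := by
      funext v
      have hmem : v ∈ B.image (σ⁻¹ : Equiv.Perm V) ↔ σ v ∈ B := by
        constructor
        · rintro h
          obtain ⟨u, hu, rfl⟩ := Finset.mem_image.mp h
          simpa using hu
        · intro h
          exact Finset.mem_image.mpr ⟨σ v, h, by simp⟩
      by_cases h : i (σ v) = true
      · have : σ v ∈ B := by simp [hB, h]
        rw [decide_eq_true (hmem.mpr this), h]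
      · simp only [Bool.not_eq_true] at h
        have : σ v ∉ B := by simp [hB, h]
        rw [decide_eq_false (fun hh => this (hmem.mp hh)), h]
    rw [e1, e2] at key
    exact key.symm


end BMMI
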